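/- For fixed x > 0 and v > 0, the sequence n ↦ H_n(x,v) is nondecreasing in n (for n ≥ x), and lim_{n→∞} H_n(x,v) = (v²/(x+v²))^{x+v²}·e^x. -/

import Mathlib

open Real Filter Topology


lemma aux_log_ge {z : ℝ} (hz : 1 ≤ z) : 2*(z-1)/(z+1) ≤ Real.log z := by
  have hd : ∀ w : ℝ, 0 < w → HasDerivAt (fun w : ℝ => Real.log w - 2*(w-1)/(w+1))
      (w⁻¹ - ((2*1)*(w+1) - (2*(w-1))*1)/((w+1)^2)) w := by
    intro w hw
    exact (Real.hasDerivAt_log hw.ne').sub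
      ((((hasDerivAt_id w).sub_const 1).const_mul 2).div ((hasDerivAt_id w).add_const 1)
        (by positivity))
  have hmono : MonotoneOn (fun w : ℝ => Real.log w - 2*(w-1)/(w+1)) (Set.Ici 1) := by
    apply monotoneOn_of_deriv_nonneg (convex_Ici 1)
    · intro w hw
      have hw0 : (0:ℝ) < w := lt_of_lt_of_le one_pos hw
      exact (hd w hw0).differentiableAt.continuousAt.continuousWithinAt
    · intro w hw
      rw [interior_Ici] at hw
      exact (hd w (lt_trans one_pos hw)).differentiableAt.differentiableWithinAt
    · intro w hw
      rw [interior_Ici] at hw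
      have hw0 : (0:ℝ) < w := lt_trans one_pos hw
      rw [(hd w hw0).deriv]
      have h1 : (0:ℝ) < w + 1 := by linarith
      have h2 : ((2*1)*(w+1) - (2*(w-1))*1)/((w+1)^2) = 4/((w+1)^2) := by ring_nf
      rw [h2, sub_nonneg, div_le_iff₀ (by positivity)]
      have hinv : w * w⁻¹ = 1 := mul_inv_cancel₀ hw0.ne'
      nlinarith [mul_nonneg (inv_nonneg.mpr hw0.le) (sq_nonneg (w-1)), hinv]
  have h := hmono Set.self_mem_Ici hz hz
  simp only [Real.log_one] at h
  linarith [h]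

lemma aux_log_le {z : ℝ} (hz : 1 ≤ z) : Real.log z ≤ (z - z⁻¹)/2 := by
  have hd : ∀ w : ℝ, 0 < w → HasDerivAt (fun w : ℝ => (w - w⁻¹)/2 - Real.log w)
      ((1 - (-(w^2)⁻¹))/2 - w⁻¹) w := by
    intro w hw
    exact (((hasDerivAt_id w).sub (hasDerivAt_inv hw.ne')).div_const 2).sub
      (Real.hasDerivAt_log hw.ne')
  have hmono : MonotoneOn (fun w : ℝ => (w - w⁻¹)/2 - Real.log w) (Set.Ici 1) := by
    apply monotoneOn_of_deriv_nonneg (convex_Ici 1)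
    · intro w hw
      exact (hd w (lt_of_lt_of_le one_pos hw)).differentiableAt.continuousAt.continuousWithinAt
    · intro w hw
      rw [interior_Ici] at hw
      exact (hd w (lt_trans one_pos hw)).differentiableAt.differentiableWithinAt
    · intro w hw
      rw [interior_Ici] at hw
      have hw0 : (0:ℝ) < w := lt_trans one_pos hw
      rw [(hd w hw0).deriv]
      have h2 : ((w:ℝ)^2)⁻¹ = w⁻¹ * w⁻¹ := by rw [sq, mul_inv]
      rw [h2]
      nlinarith [sq_nonneg (1 - w⁻¹)]
  have h := hmono Set.self_mem_Ici hz hz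
  norm_num [Real.log_one] at h
  linarith [h]

noncomputable def Faux (x v t : ℝ) : ℝ :=
  t/(t+v^2) * ((x+v^2)*Real.log (v^2/(x+v^2)) + (t-x)*(Real.log t - Real.log (t-x)))

lemma H_eq_exp (x v : ℝ) (hx : 0 < x) (hv : 0 < v) {t : ℝ} (ht : x ≤ t) :
    ((v^2/(x+v^2)) ^ (x+v^2) * (t/(t-x)) ^ (t-x)) ^ (t/(t+v^2)) = Real.exp (Faux x v t) := by
  have hv2 : (0:ℝ) < v^2 := by positivity
  have hxv : (0:ℝ) < x + v^2 := by linarith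
  have hb : (0:ℝ) < v^2/(x+v^2) := by positivity
  have hc : (0:ℝ) < (v^2/(x+v^2)) ^ (x+v^2) := Real.rpow_pos_of_pos hb _
  rcases ht.eq_or_lt with h | h
  · have hz : t - x = 0 := by rw [← h]; ring
    rw [hz, Real.rpow_zero, mul_one, Real.rpow_def_of_pos hc, Real.log_rpow hb]
    simp only [Faux, hz, zero_mul, add_zero]
    congr 1
    ring
  · have hs : (0:ℝ) < t - x := by linarith
    have ht0 : (0:ℝ) < t := lt_trans hx h
    have hq : (0:ℝ) < t/(t-x) := by positivity
    have hbase : (0:ℝ) < (v^2/(x+v^2)) ^ (x+v^2) * (t/(t-x)) ^ (t-x) :=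
      mul_pos hc (Real.rpow_pos_of_pos hq _)
    rw [Real.rpow_def_of_pos hbase, Real.log_mul hc.ne' (Real.rpow_pos_of_pos hq _).ne',
      Real.log_rpow hb, Real.log_rpow hq, Real.log_div ht0.ne' hs.ne']
    simp only [Faux]
    congr 1
    ring

lemma Faux_tendsto (x v : ℝ) (hx : 0 < x) (hv : 0 < v) :
    Tendsto (fun n : ℕ => Faux x v n) atTop
      (𝓝 ((x+v^2)*Real.log (v^2/(x+v^2)) + x)) := by
  have hv2 : (0:ℝ) < v^2 := by positivity
  have h1 : Tendsto (fun t : ℝ => t/(t+v^2)) atTop (𝓝 1) := by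
    have h0 : Tendsto (fun t : ℝ => v^2/t) atTop (𝓝 0) :=
      tendsto_const_nhds.div_atTop tendsto_id
    have h2 : Tendsto (fun t : ℝ => (1 + v^2/t)⁻¹) atTop (𝓝 1) := by
      have := (tendsto_const_nhds.add h0).inv₀ (by norm_num : (1:ℝ) + 0 ≠ 0)
      simpa using this
    apply h2.congr'
    filter_upwards [eventually_gt_atTop (0:ℝ)] with t ht
    have ht' : t ≠ 0 := ne_of_gt ht
    have h3 : (0:ℝ) < 1 + v^2/t := by positivity
    rw [inv_eq_one_div, div_eq_div_iff h3.ne' (by positivity : (0:ℝ) < t + v^2).ne']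
    field_simp
  have h2 : Tendsto (fun n : ℕ => ((n:ℝ)-x)*(Real.log n - Real.log ((n:ℝ)-x)))
      atTop (𝓝 x) := by
    have base := Real.tendsto_mul_log_one_add_div_atTop x
    have hsub : Tendsto (fun n : ℕ => (n:ℝ) - x) atTop atTop :=
      tendsto_atTop_add_const_right atTop (-x) tendsto_natCast_atTop_atTop
    have hcomp := base.comp hsub
    apply hcomp.congr'
    filter_upwards [eventually_gt_atTop ⌈x⌉₊] with n hn
    have hxn : x < (n:ℝ) := lt_of_le_of_lt (Nat.le_ceil x) (by exact_mod_cast hn)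
    have hs : (0:ℝ) < (n:ℝ) - x := by linarith
    have hn0 : (0:ℝ) < (n:ℝ) := lt_trans hx hxn
    have e1 : 1 + x/((n:ℝ)-x) = (n:ℝ)/((n:ℝ)-x) := by field_simp; ring
    simp only [Function.comp_apply, e1, Real.log_div hn0.ne' hs.ne']
  have hmain := ((h1.comp tendsto_natCast_atTop_atTop).mul (((tendsto_const_nhds : Tendsto (fun _ : ℕ => (x+v^2)*Real.log (v^2/(x+v^2))) atTop (𝓝 ((x+v^2)*Real.log (v^2/(x+v^2))))).add h2)))
  simp only [one_mul] at hmain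
  exact hmain.congr (fun n => by simp only [Function.comp_def, Faux])

lemma Faux_mono (x v : ℝ) (hx : 0 < x) (hv : 0 < v) : MonotoneOn (Faux x v) (Set.Ici x) := by
  have hv2 : (0:ℝ) < v^2 := by positivity
  have hxv : (0:ℝ) < x + v^2 := by linarith
  set K : ℝ := (x+v^2)*Real.log (v^2/(x+v^2)) with hKdef
  -- bound on K
  have hK : -x - x^2/(2*v^2) ≤ K := by
    have hz1 : (1:ℝ) ≤ (x+v^2)/v^2 := (one_le_div hv2).mpr (by linarith)
    have h := aux_log_le hz1
    have e1 : Real.log (v^2/(x+v^2)) = - Real.log ((x+v^2)/v^2) := by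
      rw [← Real.log_inv, inv_div]
    have e2 : ((x+v^2)/v^2 - ((x+v^2)/v^2)⁻¹)/2 = x*(x+2*v^2)/(2*v^2*(x+v^2)) := by
      rw [inv_div]
      field_simp
      ring
    rw [e2] at h
    have h3 := mul_le_mul_of_nonneg_left h hxv.le
    have e3 : (x+v^2) * (x*(x+2*v^2)/(2*v^2*(x+v^2))) = x + x^2/(2*v^2) := by
      field_simp
      ring
    rw [e3] at h3
    rw [hKdef, e1]
    linarith
  -- derivative of Faux
  have hd : ∀ t : ℝ, x < t → HasDerivAt (Faux x v)
      (((1*(t+v^2) - t*1)/((t+v^2)^2)) * (K + (t-x)*(Real.log t - Real.log (t-x)))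
        + t/(t+v^2) * (1*(Real.log t - Real.log (t-x)) + (t-x)*(t⁻¹ - (t-x)⁻¹))) t := by
    intro t ht
    have ht0 : (0:ℝ) < t := lt_trans hx ht
    have hs : (0:ℝ) < t - x := by linarith
    have htv : (0:ℝ) < t + v^2 := by linarith
    have h1 : HasDerivAt (fun t : ℝ => t/(t+v^2)) ((1*(t+v^2) - t*1)/((t+v^2)^2)) t :=
      (hasDerivAt_id t).div ((hasDerivAt_id t).add_const (v^2)) htv.ne'
    have h2b : HasDerivAt (fun t : ℝ => Real.log (t-x)) ((t-x)⁻¹) t := by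
      have := (Real.hasDerivAt_log hs.ne').comp t ((hasDerivAt_id t).sub_const x)
      simpa [Function.comp_def] using this
    have h2 : HasDerivAt (fun t : ℝ => (t-x)*(Real.log t - Real.log (t-x)))
        (1*(Real.log t - Real.log (t-x)) + (t-x)*(t⁻¹ - (t-x)⁻¹)) t :=
      ((hasDerivAt_id t).sub_const x).mul ((Real.hasDerivAt_log ht0.ne').sub h2b)
    have h3 := h1.mul (h2.const_add K)
    exact h3.congr_of_eventuallyEq (Filter.Eventually.of_forall fun s => by simp [Faux, hKdef])
  apply monotoneOn_of_deriv_nonneg (convex_Ici x)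
  · -- continuity on Ici x
    have c3 : Continuous (fun t : ℝ => (t-x)*Real.log (t-x)) :=
      Real.continuous_mul_log.comp (continuous_id.sub continuous_const)
    have clog : ContinuousOn Real.log (Set.Ici x) :=
      Real.continuousOn_log.mono (fun t ht =>
        Set.mem_compl_singleton_iff.mpr (ne_of_gt (lt_of_lt_of_le hx ht)))
    have c1 : ContinuousOn (fun t : ℝ => t/(t+v^2)) (Set.Ici x) :=
      continuousOn_id.div (continuousOn_id.add continuousOn_const)
        (fun t ht => by
          have h1 : x ≤ t := ht
          have : (0:ℝ) < t + v^2 := by nlinarith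
          exact ne_of_gt this)
    have cg : ContinuousOn (fun t : ℝ =>
        t/(t+v^2) * (K + ((t-x)*Real.log t - (t-x)*Real.log (t-x)))) (Set.Ici x) :=
      c1.mul (continuousOn_const.add
        (((continuousOn_id.sub continuousOn_const).mul clog).sub c3.continuousOn))
    apply cg.congr
    intro t ht
    simp only [Faux, hKdef]
    ring
  · intro t ht
    rw [interior_Ici] at ht
    exact (hd t ht).differentiableAt.differentiableWithinAt
  · intro t ht
    rw [interior_Ici] at ht
    have ht' : x < t := ht
    have ht0 : (0:ℝ) < t := lt_trans hx ht'
    have hs : (0:ℝ) < t - x := by linarith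
    have htv : (0:ℝ) < t + v^2 := by linarith
    have h2tx : (0:ℝ) < 2*t - x := by linarith
    rw [(hd t ht).deriv]
    set M : ℝ := Real.log t - Real.log (t-x) with hMdef
    -- bound on M
    have hM : 2*x ≤ M * (2*t-x) := by
      have hz : (1:ℝ) ≤ t/(t-x) := (one_le_div hs).mpr (by linarith)
      have h := aux_log_ge hz
      rw [Real.log_div ht0.ne' hs.ne'] at h
      have e : 2*(t/(t-x)-1)/(t/(t-x)+1) = 2*x/(2*t-x) := by
        rw [div_eq_div_iff (by positivity) h2tx.ne']
        field_simp
        ring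
      rw [e, div_le_iff₀ h2tx] at h
      rw [hMdef]
      linarith
    -- rewrite the derivative as P/(t+v^2)^2
    have hK2 : -(2*v^2*x) - x^2 ≤ 2*v^2*K := by
      have h1 := mul_le_mul_of_nonneg_left hK (by positivity : (0:ℝ) ≤ 2*v^2)
      have h2 : 2*v^2 * (x^2/(2*v^2)) = x^2 := mul_div_cancel₀ _ (by positivity)
      nlinarith [h1, h2]
    have hP : 0 ≤ v^2*K + M*(v^2*(2*t-x)+t^2) - x*(t+v^2) := by
      have hcoef : (0:ℝ) ≤ v^2*(2*t-x)+t^2 := by positivity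
      have key : 0 ≤ (v^2*K + M*(v^2*(2*t-x)+t^2) - x*(t+v^2)) * (2*t-x) := by
        nlinarith [mul_nonneg (by linarith : (0:ℝ) ≤ M*(2*t-x) - 2*x) hcoef,
          mul_nonneg (by linarith : (0:ℝ) ≤ 2*v^2*K + 2*v^2*x + x^2) h2tx.le,
          pow_pos hx 3]
      exact (mul_nonneg_iff_of_pos_right h2tx).mp key
    have heq : ((1*(t+v^2) - t*1)/((t+v^2)^2)) * (K + (t-x)*M)
        + t/(t+v^2) * (1*M + (t-x)*(t⁻¹ - (t-x)⁻¹))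
        = (v^2*K + M*(v^2*(2*t-x)+t^2) - x*(t+v^2)) / ((t+v^2)^2) := by
      field_simp
      ring
    rw [heq]
    positivity

theorem H_mono_and_tendsto (x v : ℝ) (hx : 0 < x) (hv : 0 < v) :
    (∀ n m : ℕ, x ≤ (n:ℝ) → n ≤ m →
      ((v^2/(x+v^2)) ^ (x+v^2) * ((n:ℝ)/((n:ℝ)-x)) ^ ((n:ℝ)-x)) ^ ((n:ℝ)/((n:ℝ)+v^2))
        ≤ ((v^2/(x+v^2)) ^ (x+v^2) * ((m:ℝ)/((m:ℝ)-x)) ^ ((m:ℝ)-x)) ^ ((m:ℝ)/((m:ℝ)+v^2)))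
    ∧ Tendsto (fun n : ℕ =>
        ((v^2/(x+v^2)) ^ (x+v^2) * ((n:ℝ)/((n:ℝ)-x)) ^ ((n:ℝ)-x)) ^ ((n:ℝ)/((n:ℝ)+v^2)))
        atTop (nhds ((v^2/(x+v^2)) ^ (x+v^2) * Real.exp x)) := by
  have hv2 : (0:ℝ) < v^2 := by positivity
  have hxv : (0:ℝ) < x + v^2 := by linarith
  have hb : (0:ℝ) < v^2/(x+v^2) := by positivity
  constructor
  · intro n m hn hm
    have hmx : x ≤ (m:ℝ) := le_trans hn (by exact_mod_cast hm)
    rw [H_eq_exp x v hx hv hn, H_eq_exp x v hx hv hmx]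
    exact Real.exp_le_exp.mpr (Faux_mono x v hx hv hn hmx (by exact_mod_cast hm))
  · have hF := Faux_tendsto x v hx hv
    have hT := (Real.continuous_exp.tendsto _).comp hF
    have hexp : Real.exp ((x+v^2)*Real.log (v^2/(x+v^2)) + x)
        = (v^2/(x+v^2)) ^ (x+v^2) * Real.exp x := by
      rw [Real.exp_add]
      congr 1
      rw [Real.rpow_def_of_pos hb, mul_comm]
    have hT' : Tendsto (fun n : ℕ => Real.exp (Faux x v n)) atTop
        (𝓝 ((v^2/(x+v^2))^(x+v^2) * Real.exp x)) := by
      rw [← hexp]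
      exact hT
    apply hT'.congr'
    filter_upwards [eventually_ge_atTop ⌈x⌉₊] with n hn
    have hxn : x ≤ (n:ℝ) := le_trans (Nat.le_ceil x) (by exact_mod_cast hn)
    exact (H_eq_exp x v hx hv hxn).symm
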